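/- For every cluster C of the cumulatively merged partition 𝒞(G,r,α): (i) the set B(C, r(C)^α) induces a connected subgraph of G; (ii) diam(C) ≤ max(r(C)·log₂ r(C)/2, 0) if α = 1, and diam(C) ≤ r(C)^α/(2^α − 2) if α > 1. -/

import Mathlib

open scoped ENNReal NNReal
open MeasureTheory

namespace CMPPaper

variable {V : Type*}

/-- Graph distance between two subsets of vertices, valued in `ℝ≥0∞`
(`⊤` when one of the sets is empty). -/
noncomputable def setDist (G : SimpleGraph V) (A B : Set V) : ℝ≥0∞ :=
  ⨅ (x : A) (y : B), (G.dist x.1 y.1 : ℝ≥0∞)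

/-- Total weight `r(A) = Σ_{x ∈ A} r(x) ∈ [0,∞]` of a set of vertices. -/
noncomputable def wt (r : V → ℝ≥0) (A : Set V) : ℝ≥0∞ :=
  ∑' x : A, (r x.1 : ℝ≥0∞)

/-- A partition (encoded as a setoid) of the vertex set is `(r,α)`-admissible if any two
distinct clusters `C ≠ C'` satisfy `d(C,C') > min(r(C), r(C'))^α`. -/
def Admissible (G : SimpleGraph V) (r : V → ℝ≥0) (α : ℝ) (s : Setoid V) : Prop :=
  ∀ C ∈ s.classes, ∀ C' ∈ s.classes, C ≠ C' →
    (min (wt r C) (wt r C')) ^ α < setDist G C C'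

/-- The cumulatively merged partition: the finest `(r,α)`-admissible partition, i.e. the
intersection (infimum as setoids) of all `(r,α)`-admissible partitions. -/
noncomputable def CMP (G : SimpleGraph V) (r : V → ℝ≥0) (α : ℝ) : Setoid V :=
  sInf {s : Setoid V | Admissible G r α s}

/-- The cluster of the CMP containing `x`. -/
def cluster (G : SimpleGraph V) (r : V → ℝ≥0) (α : ℝ) (x : V) : Set V :=
  {y | (CMP G r α) x y}

/-- The ball `B(A, l) = {z : d(z,A) ≤ l}` around a set of vertices. -/
def ballSet (G : SimpleGraph V) (A : Set V) (l : ℝ≥0∞) : Set V :=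
  {z | ∃ a ∈ A, (G.dist z a : ℝ≥0∞) ≤ l}

/-- A subset `H` of the vertices is stable if every cluster `C` of the CMP of the induced
subgraph on `H` (with the restricted weights) satisfies `B(C, r(C)^α) ⊆ H`. -/
def IsStable (G : SimpleGraph V) (r : V → ℝ≥0) (α : ℝ) (H : Set V) : Prop :=
  ∀ C ∈ (CMP (G.induce H) (fun x : H => r x) α).classes,
    ballSet G (Subtype.val '' C) ((wt (fun x : H => r x) C) ^ α) ⊆ H

/-- The stabiliser of `W`: the smallest stable set containing `W`, i.e. the intersection of
all stable sets containing `W`. -/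
def stabiliser (G : SimpleGraph V) (r : V → ℝ≥0) (α : ℝ) (W : Set V) : Set V :=
  ⋂₀ {H : Set V | IsStable G r α H ∧ W ⊆ H}

open Classical in
/-- The merging operator `M_{x,y}`: if the clusters of `x` and `y` are distinct and
`d(x,y) ≤ min(r(𝒞_x), r(𝒞_y))^α`, merge them (take the smallest coarsening of `s`
relating `x` and `y`); otherwise leave the partition unchanged. -/
noncomputable def mergeOp (G : SimpleGraph V) (r : V → ℝ≥0) (α : ℝ) (x y : V)
    (s : Setoid V) : Setoid V :=
  if ¬ s x y ∧ (G.dist x y : ℝ≥0∞) ≤ (min (wt r {u | s x u}) (wt r {u | s y u})) ^ α then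
    sInf {t : Setoid V | s ≤ t ∧ t x y}
  else s

/-- The relation `C ↦ C'` (`C'` descends from `C`) on clusters of the CMP. -/
def Descends (G : SimpleGraph V) (r : V → ℝ≥0) (α : ℝ) (C C' : Set V) : Prop :=
  C ∈ (CMP G r α).classes ∧ C' ∈ (CMP G r α).classes ∧ C ≠ C' ∧
    setDist G C C' ≤ (wt r C) ^ α

/-- Integer part of an extended nonnegative real, valued in `ℕ∞`. -/
noncomputable def efloor (x : ℝ≥0∞) : ℕ∞ :=
  if x = ⊤ then ⊤ else (⌊x.toReal⌋₊ : ℕ∞)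

/-- The bound `max(w log₂ w / 2, 0)` (for `α = 1`), resp. `w^α/(2^α-2)` (for `α ≠ 1`),
on the diameter of a cluster of total weight `w`. -/
noncomputable def diamBound (α : ℝ) (w : ℝ≥0∞) : ℝ≥0∞ :=
  if α = 1 then
    (if w = ⊤ then ⊤ else ENNReal.ofReal (max (w.toReal * Real.logb 2 w.toReal / 2) 0))
  else w ^ α / ((2 : ℝ≥0∞) ^ α - 2)

/-- The relation `C →η C'` on clusters of the CMP:  `d(C,C') ≤ η·r(C)^α`. -/
def EtaDesc (G : SimpleGraph V) (r : V → ℝ≥0) (α η : ℝ) (C C' : Set V) : Prop :=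
  C ∈ (CMP G r α).classes ∧ C' ∈ (CMP G r α).classes ∧ C ≠ C' ∧
    setDist G C C' ≤ ENNReal.ofReal η * (wt r C) ^ α

/-- The `η`-stabiliser of a vertex `x`: the union of `𝒞_x` together with all clusters
reachable from `𝒞_x` by a finite oriented path for the relation `→η`. -/
def etaStab (G : SimpleGraph V) (r : V → ℝ≥0) (α η : ℝ) (x : V) : Set V :=
  ⋃₀ {C' | Relation.ReflTransGen (EtaDesc G r α η) (cluster G r α x) C'}

/-- The path graph on `ℕ`: `m` and `m+1` are adjacent. -/
def pathGraphN : SimpleGraph ℕ := SimpleGraph.fromRel (fun m n => n = m + 1)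

/-- The two-sided path graph on `ℤ`: `k` and `k+1` are adjacent. -/
def pathGraphZ : SimpleGraph ℤ := SimpleGraph.fromRel (fun a b => b = a + 1)

/-- The hypercubic lattice `ℤ^d`: `x` and `y` are adjacent iff `‖x-y‖₁ = 1`. -/
def latticeGraph (d : ℕ) : SimpleGraph (Fin d → ℤ) :=
  SimpleGraph.fromRel (fun x y => (∑ i, |x i - y i|) = 1)

/-- The CMP of the weighted graph `(G, r)` with expansion exponent `α` has an
infinite cluster. -/
def HasInfiniteCluster (G : SimpleGraph V) (r : V → ℝ≥0) (α : ℝ) : Prop :=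
  ∃ C ∈ (CMP G r α).classes, C.Infinite

/-- `w` is an i.i.d. family of Bernoulli(`p`) weights indexed by `V`, under the
probability measure `μ`. -/
def IsBernoulliField {Ω : Type*} [MeasurableSpace Ω] (μ : Measure Ω)
    (p : ℝ) (w : Ω → V → ℝ≥0) : Prop :=
  (∀ x : V, Measurable fun ω => w ω x) ∧
  (∀ ω x, w ω x = 0 ∨ w ω x = 1) ∧
  (∀ x : V, μ {ω | w ω x = 1} = ENNReal.ofReal p) ∧
  ProbabilityTheory.iIndepFun (fun x ω => w ω x) μ

/-- `w` is an i.i.d. family of weights indexed by `V`, each with law `ν`, under the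
probability measure `μ`. -/
def IsIIDField {Ω : Type*} [MeasurableSpace Ω] (μ : Measure Ω)
    (ν : Measure ℝ≥0) (w : Ω → V → ℝ≥0) : Prop :=
  (∀ x : V, Measurable fun ω => w ω x) ∧
  (∀ x : V, μ.map (fun ω => w ω x) = ν) ∧
  ProbabilityTheory.iIndepFun (fun x ω => w ω x) μ


section Aux
variable {G : SimpleGraph V} {r : V → ℝ≥0} {α : ℝ}

lemma setDist_le {G : SimpleGraph V} {A B : Set V} {a b : V} (ha : a ∈ A) (hb : b ∈ B) :
    setDist G A B ≤ (G.dist a b : ℝ≥0∞) := by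
  have h1 : setDist G A B ≤ ⨅ (y : B), (G.dist a y.1 : ℝ≥0∞) := iInf_le (fun x : A => ⨅ (y : B), (G.dist x.1 y.1 : ℝ≥0∞)) ⟨a, ha⟩
  exact h1.trans (iInf_le (fun y : B => (G.dist a y.1 : ℝ≥0∞)) ⟨b, hb⟩)

lemma exists_setDist_eq {G : SimpleGraph V} {A B : Set V} (hA : A.Nonempty) (hB : B.Nonempty) :
    ∃ a ∈ A, ∃ b ∈ B, setDist G A B = (G.dist a b : ℝ≥0∞) := by
  have hne : {n : ℕ | ∃ a ∈ A, ∃ b ∈ B, G.dist a b = n}.Nonempty := by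
    obtain ⟨a, ha⟩ := hA; obtain ⟨b, hb⟩ := hB
    exact ⟨G.dist a b, a, ha, b, hb, rfl⟩
  obtain ⟨a, ha, b, hb, hd⟩ := Nat.sInf_mem hne
  refine ⟨a, ha, b, hb, le_antisymm (setDist_le ha hb) ?_⟩
  refine le_iInf fun x => le_iInf fun y => ?_
  have : sInf {n : ℕ | ∃ a ∈ A, ∃ b ∈ B, G.dist a b = n} ≤ G.dist x.1 y.1 :=
    Nat.sInf_le ⟨x.1, x.2, y.1, y.2, rfl⟩
  rw [hd]
  exact_mod_cast this

lemma setDist_anti {G : SimpleGraph V} {A B A' B' : Set V} (hA : A' ⊆ A) (hB : B' ⊆ B) :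
    setDist G A B ≤ setDist G A' B' := by
  refine le_iInf fun x => le_iInf fun y => setDist_le (hA x.2) (hB y.2)

lemma setDist_comm {G : SimpleGraph V} (A B : Set V) : setDist G A B = setDist G B A := by
  unfold setDist
  rw [iInf_comm]
  simp only [SimpleGraph.dist_comm]

lemma one_le_setDist {G : SimpleGraph V} (hconn : G.Connected) {A B : Set V}
    (hd : Disjoint A B) : 1 ≤ setDist G A B := by
  refine le_iInf fun x => le_iInf fun y => ?_
  have hne : x.1 ≠ y.1 := fun h => (Set.disjoint_left.1 hd) x.2 (h ▸ y.2)
  have := hconn.pos_dist_of_ne hne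
  exact_mod_cast Nat.one_le_cast.2 this

lemma wt_mono {r : V → ℝ≥0} {A B : Set V} (h : A ⊆ B) : wt r A ≤ wt r B := by
  unfold wt
  rw [tsum_subtype A fun x => (r x : ℝ≥0∞), tsum_subtype B fun x => (r x : ℝ≥0∞)]
  exact ENNReal.tsum_le_tsum fun a => Set.indicator_le_indicator_of_subset h (fun _ => zero_le) a

lemma wt_union_disjoint {r : V → ℝ≥0} {A B : Set V} (h : Disjoint A B) :
    wt r (A ∪ B) = wt r A + wt r B :=
  by unfold wt; exact ENNReal.summable.tsum_union_disjoint (f := fun x => (r x : ℝ≥0∞)) h ENNReal.summable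

lemma wt_lt_top_of_finite {r : V → ℝ≥0} {A : Set V} (h : A.Finite) : wt r A < ⊤ := by
  have := h.fintype
  rw [wt, tsum_fintype]
  exact ENNReal.sum_lt_top.2 fun a _ => ENNReal.coe_lt_top


section Setoid
variable {s : Setoid V} {C : Set V}

lemma class_nonempty (hC : C ∈ s.classes) : C.Nonempty := by
  obtain ⟨y, rfl⟩ := hC
  exact ⟨y, s.refl y⟩

lemma rel_of_mem_class (hC : C ∈ s.classes) {a b : V} (ha : a ∈ C) (hb : b ∈ C) : s a b := by
  obtain ⟨y, rfl⟩ := hC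
  exact s.trans ha (s.symm hb)

lemma mem_class_of_rel (hC : C ∈ s.classes) {a b : V} (ha : a ∈ C) (hr : s a b) : b ∈ C := by
  obtain ⟨y, rfl⟩ := hC
  exact s.trans (s.symm hr) ha

end Setoid

variable {G : SimpleGraph V} {r : V → ℝ≥0} {α : ℝ}

lemma cmp_le_admissible {s : Setoid V} (h : Admissible G r α s) : CMP G r α ≤ s :=
  sInf_le h

lemma cmp_admissible (hα : 0 ≤ α) : Admissible G r α (CMP G r α) := by
  intro C hC C' hC' hne
  obtain ⟨a, ha, b, hb, heq⟩ := exists_setDist_eq (class_nonempty hC) (class_nonempty hC')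
  have hnr : ¬ (CMP G r α) a b := by
    intro hr
    exact hne (Setoid.eq_of_mem_classes hC (mem_class_of_rel hC ha hr) hC' hb)
  -- get an admissible setoid separating a and b
  have : ¬ ∀ t ∈ {s : Setoid V | Admissible G r α s}, t a b := hnr
  push_neg at this
  obtain ⟨t, ht, htab⟩ := this
  set A : Set V := {z | t z a} with hAdef
  set B : Set V := {z | t z b} with hBdef
  have hAcl : A ∈ t.classes := t.mem_classes a
  have hBcl : B ∈ t.classes := t.mem_classes b
  have hABne : A ≠ B := by
    intro h
    have : b ∈ A := h ▸ (show b ∈ B from t.refl b)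
    exact htab (t.symm this)
  have hCA : C ⊆ A := by
    intro z hz
    have : (CMP G r α) z a := rel_of_mem_class hC hz ha
    exact this t ht
  have hC'B : C' ⊆ B := by
    intro z hz
    have : (CMP G r α) z b := rel_of_mem_class hC' hz hb
    exact this t ht
  calc (min (wt r C) (wt r C')) ^ α
      ≤ (min (wt r A) (wt r B)) ^ α :=
        ENNReal.rpow_le_rpow (min_le_min (wt_mono hCA) (wt_mono hC'B)) hα
    _ < setDist G A B := ht A hAcl B hBcl hABne
    _ ≤ (G.dist a b : ℝ≥0∞) := setDist_le (t.refl a) (t.refl b)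
    _ = setDist G C C' := heq.symm


lemma split_lemma (hconn : G.Connected) (hα : 0 ≤ α) {C A B : Set V}
    (hC : C ∈ (CMP G r α).classes) (hA : A.Nonempty) (hB : B.Nonempty)
    (hdisj : Disjoint A B) (hun : A ∪ B = C) :
    setDist G A B ≤ (min (wt r A) (wt r B)) ^ α := by
  by_contra hlt
  push_neg at hlt
  -- the split partition
  set s₀ := CMP G r α with hs₀
  set s' : Setoid V := ⟨fun u v => s₀ u v ∧ (u ∈ A ↔ v ∈ A),
    ⟨fun u => ⟨s₀.refl u, Iff.rfl⟩,
     fun h => ⟨s₀.symm h.1, h.2.symm⟩,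
     fun h h' => ⟨s₀.trans h.1 h'.1, h.2.trans h'.2⟩⟩⟩ with hs'
  have hs'rel : ∀ u v : V, s' u v ↔ (s₀ u v ∧ (u ∈ A ↔ v ∈ A)) := fun u v => Iff.rfl
  have hAC : A ⊆ C := hun ▸ Set.subset_union_left
  have hBC : B ⊆ C := hun ▸ Set.subset_union_right
  have hsymdist : setDist G B A = setDist G A B := by
    unfold setDist; rw [iInf_comm]; simp only [SimpleGraph.dist_comm]
  -- s' is admissible
  have hadm : Admissible G r α s' := by
    intro D hD D' hD' hne
    obtain ⟨u, rfl⟩ := hD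
    obtain ⟨u', rfl⟩ := hD'
    set D : Set V := {v | s' v u} with hDdef
    set D' : Set V := {v | s' v u'} with hD'def
    have hDsub : D ⊆ {v | s₀ v u} := fun v hv => hv.1
    have hD'sub : D' ⊆ {v | s₀ v u'} := fun v hv => hv.1
    by_cases hr : s₀ u u'
    · -- same CMP class; D, D' are the two halves A, B of C (in some order)
      have hnotiff : ¬ (u ∈ A ↔ u' ∈ A) := by
        intro hiff
        apply hne
        ext v
        constructor
        · intro hv
          exact ⟨s₀.trans hv.1 hr, hv.2.trans hiff⟩
        · intro hv
          exact ⟨s₀.trans hv.1 (s₀.symm hr), hv.2.trans hiff.symm⟩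
      -- one of u, u' is in A
      have key : ∀ w w' : V, w ∈ A → w' ∉ A → s₀ w w' →
          ∀ (E E' : Set V), E = {v | s' v w} → E' = {v | s' v w'} →
          (min (wt r E) (wt r E')) ^ α < setDist G E E' := by
        intro w w' hw hw' hrel E E' hE hE'
        have hwC : w ∈ C := hAC hw
        have hw'C : w' ∈ C := mem_class_of_rel hC hwC hrel
        have hw'B : w' ∈ B := by
          rcases (hun ▸ hw'C : w' ∈ A ∪ B) with h | h
          · exact absurd h hw'
          · exact h
        have hEA : E ⊆ A := by
          intro v hv
          rw [hE] at hv
          exact hv.2.2 hw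
        have hE'B : E' ⊆ B := by
          intro v hv
          rw [hE'] at hv
          have hvC : v ∈ C := mem_class_of_rel hC hw'C (s₀.symm hv.1)
          have hvA : v ∉ A := fun hvA => hw' (hv.2.1 hvA)
          rcases (hun ▸ hvC : v ∈ A ∪ B) with h | h
          · exact absurd h hvA
          · exact h
        calc (min (wt r E) (wt r E')) ^ α
            ≤ (min (wt r A) (wt r B)) ^ α :=
              ENNReal.rpow_le_rpow (min_le_min (wt_mono hEA) (wt_mono hE'B)) hα
          _ < setDist G A B := hlt
          _ ≤ setDist G E E' := setDist_anti hEA hE'B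
      rcases Classical.em (u ∈ A) with hu | hu
      · have hu' : u' ∉ A := fun h => hnotiff ⟨fun _ => h, fun _ => hu⟩
        exact key u u' hu hu' hr D D' rfl rfl
      · have hu' : u' ∈ A := by
          by_contra h
          exact hnotiff ⟨fun h' => absurd h' hu, fun h' => absurd h' h⟩
        have := key u' u hu' hu (s₀.symm hr) D' D rfl rfl
        calc (min (wt r D) (wt r D')) ^ α
            = (min (wt r D') (wt r D)) ^ α := by rw [min_comm]
          _ < setDist G D' D := this
          _ = setDist G D D' := by
              unfold setDist; rw [iInf_comm]; simp only [SimpleGraph.dist_comm]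
    · -- different CMP classes: use admissibility of CMP
      have hE : {v | s₀ v u} ∈ s₀.classes := s₀.mem_classes u
      have hE' : {v | s₀ v u'} ∈ s₀.classes := s₀.mem_classes u'
      have hEne : {v | s₀ v u} ≠ {v | s₀ v u'} := by
        intro h
        have : u ∈ {v | s₀ v u'} := h ▸ (s₀.refl u)
        exact hr this
      calc (min (wt r D) (wt r D')) ^ α
          ≤ (min (wt r {v | s₀ v u}) (wt r {v | s₀ v u'})) ^ α :=
            ENNReal.rpow_le_rpow (min_le_min (wt_mono hDsub) (wt_mono hD'sub)) hα
        _ < setDist G {v | s₀ v u} {v | s₀ v u'} := cmp_admissible hα _ hE _ hE' hEne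
        _ ≤ setDist G D D' := setDist_anti hDsub hD'sub
  -- contradiction: CMP ≤ s' yet A and B are glued in C
  obtain ⟨a, ha⟩ := hA
  obtain ⟨b, hb⟩ := hB
  have hrel : s₀ a b := rel_of_mem_class hC (hAC ha) (hBC hb)
  have : s' a b := (cmp_le_admissible hadm) hrel
  have hbA : b ∈ A := this.2.1 ha
  exact (Set.disjoint_left.1 hdisj) hbA hb


lemma wt_finset (t : Finset V) : wt r (↑t : Set V) = ∑ x ∈ t, (r x : ℝ≥0∞) := by
  unfold wt
  exact Finset.tsum_subtype t fun x => (r x : ℝ≥0∞)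

lemma class_finite (hconn : G.Connected) (hα : 1 ≤ α)
    {C : Set V} (hC : C ∈ (CMP G r α).classes) (hw : wt r C ≠ ⊤) : C.Finite := by
  classical
  by_contra hinf
  rw [← Set.not_infinite, not_not] at hinf
  have hα0 : (0:ℝ) ≤ α := le_trans zero_le_one hα
  -- find a finite nonempty F ⊆ C with wt (C \ F) < 1
  obtain ⟨x₀, hx₀⟩ := hinf.nonempty
  obtain ⟨F, hFC, hFne, hFfin, htail⟩ :
      ∃ F : Set V, F ⊆ C ∧ F.Nonempty ∧ F.Finite ∧ wt r (C \ F) < 1 := by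
    rcases lt_or_ge (wt r C) 1 with h1 | h1
    · exact ⟨{x₀}, Set.singleton_subset_iff.2 hx₀, Set.singleton_nonempty x₀,
        Set.finite_singleton x₀, lt_of_le_of_lt (wt_mono Set.diff_subset) h1⟩
    · have hlt : wt r C - 1 < wt r C :=
        ENNReal.sub_lt_self hw (by intro h; rw [h] at h1; exact absurd h1 (by simp)) one_ne_zero
      have hrepr : wt r C = ⨆ s : Finset ↑C, ∑ a ∈ s, (r a.1 : ℝ≥0∞) := by
        rw [wt]; exact ENNReal.tsum_eq_iSup_sum
      rw [hrepr] at hlt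
      obtain ⟨s, hs⟩ := lt_iSup_iff.1 hlt
      rw [← hrepr] at hs
      set F : Set V := (↑(s.image Subtype.val) : Set V) ∪ {x₀} with hF
      have hFC : F ⊆ C := by
        intro z hz
        rcases hz with hz | hz
        · obtain ⟨y, _, rfl⟩ := Finset.mem_image.1 (by exact_mod_cast hz)
          exact y.2
        · exact (Set.mem_singleton_iff.1 hz) ▸ hx₀
      have hFfin : F.Finite := (Finset.finite_toSet _).union (Set.finite_singleton x₀)
      refine ⟨F, hFC, ⟨x₀, Or.inr rfl⟩, hFfin, ?_⟩
      -- wt F > wt C - 1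
      have hsum : wt r (↑(s.image Subtype.val) : Set V) = ∑ a ∈ s, (r a.1 : ℝ≥0∞) := by
        rw [wt_finset]
        exact Finset.sum_image (fun x _ y _ h => Subtype.val_injective h)
      have hFwt : wt r C - 1 < wt r F := by
        refine lt_of_lt_of_le hs ?_
        rw [← hsum]
        exact wt_mono Set.subset_union_left
      -- conclude tail < 1
      by_contra htail
      push_neg at htail
      have hsplit : wt r C = wt r F + wt r (C \ F) := by
        rw [← wt_union_disjoint Set.disjoint_sdiff_right, Set.union_diff_cancel hFC]
      have : wt r C - 1 + 1 < wt r F + wt r (C \ F) := by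
        calc wt r C - 1 + 1 < wt r F + 1 := ENNReal.add_lt_add_right (by simp) hFwt
          _ ≤ wt r F + wt r (C \ F) := by exact add_le_add_right htail _
      rw [tsub_add_cancel_of_le h1, ← hsplit] at this
      exact lt_irrefl _ this
  -- now split C into F and C \ F and contradict
  have hBne : (C \ F).Nonempty := (hinf.diff hFfin).nonempty
  have hsd := split_lemma (G := G) (r := r) (α := α) hconn hα0 hC hFne hBne
    Set.disjoint_sdiff_right (Set.union_diff_cancel hFC)
  have h1le : (1:ℝ≥0∞) ≤ setDist G F (C \ F) := one_le_setDist hconn Set.disjoint_sdiff_right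
  have hminle : min (wt r F) (wt r (C \ F)) ≤ wt r (C \ F) := min_le_right _ _
  have hm1 : min (wt r F) (wt r (C \ F)) ≤ 1 := le_of_lt (lt_of_le_of_lt hminle htail)
  have : (min (wt r F) (wt r (C \ F))) ^ α < 1 := by
    calc (min (wt r F) (wt r (C \ F))) ^ α
        ≤ (min (wt r F) (wt r (C \ F))) ^ (1:ℝ) :=
          ENNReal.rpow_le_rpow_of_exponent_ge hm1 hα
      _ = min (wt r F) (wt r (C \ F)) := ENNReal.rpow_one _
      _ ≤ wt r (C \ F) := hminle
      _ < 1 := htail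
  exact absurd (le_trans h1le hsd) (not_le.2 this)


/-- Convexity difference inequality. -/
lemma convex_diff_ineq {f : ℝ → ℝ} (hf : ConvexOn ℝ (Set.Ici 0) f)
    {x y d : ℝ} (hx : 0 ≤ x) (hxy : x ≤ y) (hd : 0 ≤ d) :
    f (x + d) + f y ≤ f (y + d) + f x := by
  rcases eq_or_lt_of_le (by linarith : (0:ℝ) ≤ y - x + d) with hc | hc
  · have hyx : y = x := by linarith
    have hd0 : d = 0 := by linarith
    rw [hyx, hd0, add_zero]
  · set c : ℝ := y - x + d with hcdef
    have hcne : c ≠ 0 := ne_of_gt hc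
    set t : ℝ := d / c with htdef
    set s : ℝ := (y - x) / c with hsdef
    have hts : t + s = 1 := by
      rw [htdef, hsdef, ← add_div, show d + (y - x) = c by rw [hcdef]; ring,
        div_self hcne]
    have ht0 : 0 ≤ t := div_nonneg hd (le_of_lt hc)
    have hs0 : 0 ≤ s := div_nonneg (by linarith) (le_of_lt hc)
    have hy0 : (0:ℝ) ≤ y := le_trans hx hxy
    have hyd : (0:ℝ) ≤ y + d := by linarith
    have h1 : f (s • x + t • (y + d)) ≤ s • f x + t • f (y + d) :=
      hf.2 (Set.mem_Ici.2 hx) (Set.mem_Ici.2 hyd) hs0 ht0 (by linarith)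
    have h2 : f (t • x + s • (y + d)) ≤ t • f x + s • f (y + d) :=
      hf.2 (Set.mem_Ici.2 hx) (Set.mem_Ici.2 hyd) ht0 hs0 hts
    have e1 : s • x + t • (y + d) = x + d := by
      simp only [smul_eq_mul, hsdef, htdef]
      field_simp
      ring
    have e2 : t • x + s • (y + d) = y := by
      simp only [smul_eq_mul, hsdef, htdef]
      field_simp
      ring
    rw [e1] at h1
    rw [e2] at h2
    have hcomb := add_le_add h1 h2
    simp only [smul_eq_mul] at hcomb
    have hsum : s * f x + t * f (y + d) + (t * f x + s * f (y + d))
        = f x + f (y + d) := by linear_combination (f x + f (y + d)) * hts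
    rw [hsum] at hcomb
    linarith

/-- Core real inequality for `α > 1`. -/
lemma rpow_core_ineq {α x y : ℝ} (hα : 1 ≤ α) (hx : 0 ≤ x) (hxy : x ≤ y) :
    ((2:ℝ) ^ α - 1) * x ^ α + y ^ α ≤ (x + y) ^ α := by
  have hconv : ConvexOn ℝ (Set.Ici 0) fun t : ℝ => t ^ α := convexOn_rpow hα
  have h := convex_diff_ineq hconv hx hxy hx
  -- h : (x+x)^α + y^α ≤ (y+x)^α + x^α
  have h2x : (x + x) ^ α = 2 ^ α * x ^ α := by
    rw [show x + x = 2 * x by ring, Real.mul_rpow (by norm_num) hx]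
  rw [h2x] at h
  have hyx : (y + x) = (x + y) := by ring
  rw [hyx] at h
  nlinarith [h]

/-- `2^u ≤ 1 + u` for `u ∈ [0,1]`. -/
lemma two_rpow_le_one_add {u : ℝ} (h0 : 0 ≤ u) (h1 : u ≤ 1) : (2:ℝ) ^ u ≤ 1 + u := by
  have hconv : ConvexOn ℝ Set.univ Real.exp := convexOn_exp
  have h := hconv.2 (Set.mem_univ (0:ℝ)) (Set.mem_univ (Real.log 2))
    (by linarith : (0:ℝ) ≤ 1 - u) h0 (by ring)
  simp only [smul_eq_mul, mul_zero, zero_add, Real.exp_zero, mul_one] at h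
  have : Real.exp (u * Real.log 2) ≤ (1 - u) + u * Real.exp (Real.log 2) := h
  rw [Real.exp_log (by norm_num : (0:ℝ) < 2)] at this
  have hrp : (2:ℝ) ^ u = Real.exp (Real.log 2 * u) := Real.rpow_def_of_pos (by norm_num) u
  rw [hrp, mul_comm]
  linarith

/-- Core real inequality for `α = 1`. -/
lemma log_core_ineq {a b : ℝ} (ha : 1 ≤ a) (hab : a ≤ b) :
    a * Real.logb 2 a + b * Real.logb 2 b + 2 * a ≤ (a + b) * Real.logb 2 (a + b) := by
  have hb1 : (1:ℝ) ≤ b := le_trans ha hab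
  have ha0 : (0:ℝ) < a := lt_of_lt_of_le zero_lt_one ha
  have hb0 : (0:ℝ) < b := lt_of_lt_of_le zero_lt_one hb1
  have hab0 : (0:ℝ) < a + b := by linarith
  have h2 : (1:ℝ) < 2 := one_lt_two
  -- a * logb (a+b) ≥ a * (1 + logb a)
  have hA : a * (1 + Real.logb 2 a) ≤ a * Real.logb 2 (a + b) := by
    have h2a : Real.logb 2 (2 * a) = 1 + Real.logb 2 a := by
      rw [Real.logb_mul (by norm_num) (ne_of_gt ha0), Real.logb_self_eq_one one_lt_two]
    have : Real.logb 2 (2 * a) ≤ Real.logb 2 (a + b) :=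
      Real.logb_le_logb_of_le h2 (by linarith) (by linarith)
    rw [h2a] at this
    exact mul_le_mul_of_nonneg_left this (le_of_lt ha0)
  -- b * logb (a+b) ≥ b * logb b + a
  have hB : b * Real.logb 2 b + a ≤ b * Real.logb 2 (a + b) := by
    have key : a / b ≤ Real.logb 2 (1 + a / b) := by
      rw [Real.le_logb_iff_rpow_le h2 (by positivity)]
      exact two_rpow_le_one_add (by positivity) (by
        rw [div_le_one hb0]; exact hab)
    have hsplit : Real.logb 2 (a + b) = Real.logb 2 b + Real.logb 2 (1 + a / b) := by
      rw [← Real.logb_mul (ne_of_gt hb0) (by positivity)]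
      congr 1
      field_simp
      ring
    have : b * Real.logb 2 (a + b) = b * Real.logb 2 b + b * Real.logb 2 (1 + a / b) := by
      rw [hsplit]; ring
    rw [this]
    have : a ≤ b * Real.logb 2 (1 + a / b) := by
      calc a = b * (a / b) := by field_simp
        _ ≤ b * Real.logb 2 (1 + a / b) := mul_le_mul_of_nonneg_left key (le_of_lt hb0)
    linarith
  have expand : (a + b) * Real.logb 2 (a + b) = a * Real.logb 2 (a+b) + b * Real.logb 2 (a+b) := by ring
  rw [expand]
  nlinarith [hA, hB]


lemma diamBound_superadd_aux {α : ℝ} (hα : 1 ≤ α) {w₁ w₂ : ℝ≥0∞}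
    (h1 : 1 ≤ w₁) (hw : w₁ ≤ w₂) (hf1 : w₁ ≠ ⊤) (hf2 : w₂ ≠ ⊤) :
    diamBound α w₁ + diamBound α w₂ + (min w₁ w₂) ^ α ≤ diamBound α (w₁ + w₂) := by
  have h2 : 1 ≤ w₂ := le_trans h1 hw
  have hsumne : w₁ + w₂ ≠ ⊤ := ENNReal.add_ne_top.2 ⟨hf1, hf2⟩
  set a := w₁.toReal with hadef
  set b := w₂.toReal with hbdef
  have ha1 : (1:ℝ) ≤ a := by
    rw [hadef, ← ENNReal.toReal_one]
    exact ENNReal.toReal_mono hf1 h1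
  have hb1 : (1:ℝ) ≤ b := by
    rw [hbdef, ← ENNReal.toReal_one]
    exact ENNReal.toReal_mono hf2 h2
  have hab : a ≤ b := ENNReal.toReal_mono hf2 hw
  have hmin : min w₁ w₂ = w₁ := min_eq_left hw
  have htoadd : (w₁ + w₂).toReal = a + b := ENNReal.toReal_add hf1 hf2
  rcases eq_or_ne α 1 with hα1 | hα1
  · subst hα1
    rw [diamBound, diamBound, diamBound, if_pos rfl, if_pos rfl, if_pos rfl,
      if_neg hf1, if_neg hf2, if_neg hsumne, hmin, ENNReal.rpow_one, htoadd]
    have hX : (0:ℝ) ≤ a * Real.logb 2 a / 2 := by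
      have := Real.logb_nonneg one_lt_two ha1
      positivity
    have hY : (0:ℝ) ≤ b * Real.logb 2 b / 2 := by
      have := Real.logb_nonneg one_lt_two hb1
      positivity
    have hZ : (0:ℝ) ≤ (a + b) * Real.logb 2 (a + b) / 2 := by
      have := Real.logb_nonneg one_lt_two (by linarith : (1:ℝ) ≤ a + b)
      positivity
    rw [max_eq_left hX, max_eq_left hY, max_eq_left hZ]
    have hw1 : w₁ = ENNReal.ofReal a := (ENNReal.ofReal_toReal hf1).symm
    rw [hw1, ← ENNReal.ofReal_add hX hY, ← ENNReal.ofReal_add (by positivity) (by linarith)]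
    apply ENNReal.ofReal_le_ofReal
    have := log_core_ineq ha1 hab
    linarith
  · -- α > 1
    have hαgt : 1 < α := lt_of_le_of_ne hα (Ne.symm hα1)
    set K : ℝ≥0∞ := (2:ℝ≥0∞) ^ α - 2 with hKdef
    have h2top : ((2:ℝ≥0∞) ^ α) ≠ ⊤ := by
      exact ENNReal.rpow_ne_top_of_nonneg (by linarith) (by simp)
    have h2lt : (2:ℝ≥0∞) < 2 ^ α := by
      calc (2:ℝ≥0∞) = 2 ^ (1:ℝ) := (ENNReal.rpow_one 2).symm
        _ < 2 ^ α := ENNReal.rpow_lt_rpow_of_exponent_lt (by norm_num) (by simp) hαgt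
    have hKne : K ≠ 0 := by
      rw [hKdef]
      exact (tsub_pos_of_lt h2lt).ne'
    have hKtop : K ≠ ⊤ := by
      rw [hKdef]
      exact ne_top_of_le_ne_top h2top tsub_le_self
    rw [diamBound, diamBound, diamBound, if_neg hα1, if_neg hα1, if_neg hα1, hmin, ← hKdef]
    have hw1K : (w₁ : ℝ≥0∞) ^ α = w₁ ^ α * K / K := by
      rw [div_eq_mul_inv, mul_assoc, ENNReal.mul_inv_cancel hKne hKtop, mul_one]
    nth_rewrite 2 [hw1K]
    rw [ENNReal.div_add_div_same, ENNReal.div_add_div_same]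
    apply ENNReal.div_le_div_right
    -- finite, pass to reals
    have hLne : w₁ ^ α + w₂ ^ α + w₁ ^ α * K ≠ ⊤ := by
      apply ENNReal.add_ne_top.2
      constructor
      · exact ENNReal.add_ne_top.2 ⟨ENNReal.rpow_ne_top_of_nonneg (by linarith) hf1,
          ENNReal.rpow_ne_top_of_nonneg (by linarith) hf2⟩
      · exact ENNReal.mul_ne_top (ENNReal.rpow_ne_top_of_nonneg (by linarith) hf1) hKtop
    have hRne : (w₁ + w₂) ^ α ≠ ⊤ := ENNReal.rpow_ne_top_of_nonneg (by linarith) hsumne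
    rw [← ENNReal.toReal_le_toReal hLne hRne]
    have e1 : ((w₁:ℝ≥0∞) ^ α).toReal = a ^ α := (ENNReal.toReal_rpow _ _).symm
    have e2 : ((w₂:ℝ≥0∞) ^ α).toReal = b ^ α := (ENNReal.toReal_rpow _ _).symm
    have e3 : (((w₁ + w₂):ℝ≥0∞) ^ α).toReal = (a + b) ^ α := by
      rw [← ENNReal.toReal_rpow, htoadd]
    have eK : K.toReal = (2:ℝ) ^ α - 2 := by
      rw [hKdef, ENNReal.toReal_sub_of_le (le_of_lt h2lt) h2top, ← ENNReal.toReal_rpow]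
      norm_num
    rw [ENNReal.toReal_add (ENNReal.add_ne_top.2 ⟨ENNReal.rpow_ne_top_of_nonneg (by linarith) hf1,
          ENNReal.rpow_ne_top_of_nonneg (by linarith) hf2⟩)
        (ENNReal.mul_ne_top (ENNReal.rpow_ne_top_of_nonneg (by linarith) hf1) hKtop),
      ENNReal.toReal_add (ENNReal.rpow_ne_top_of_nonneg (by linarith) hf1)
        (ENNReal.rpow_ne_top_of_nonneg (by linarith) hf2),
      ENNReal.toReal_mul, e1, e2, e3, eK]
    have := rpow_core_ineq (le_of_lt hαgt) (by linarith : (0:ℝ) ≤ a) hab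
    nlinarith [this]

lemma diamBound_superadd {α : ℝ} (hα : 1 ≤ α) {w₁ w₂ : ℝ≥0∞}
    (h1 : 1 ≤ w₁) (h2 : 1 ≤ w₂) (hf1 : w₁ ≠ ⊤) (hf2 : w₂ ≠ ⊤) :
    diamBound α w₁ + diamBound α w₂ + (min w₁ w₂) ^ α ≤ diamBound α (w₁ + w₂) := by
  rcases le_total w₁ w₂ with hw | hw
  · exact diamBound_superadd_aux hα h1 hw hf1 hf2
  · have := diamBound_superadd_aux hα h2 hw hf2 hf1
    calc diamBound α w₁ + diamBound α w₂ + (min w₁ w₂) ^ α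
        = diamBound α w₂ + diamBound α w₁ + (min w₂ w₁) ^ α := by rw [min_comm, add_comm (diamBound α w₁)]
      _ ≤ diamBound α (w₂ + w₁) := this
      _ = diamBound α (w₁ + w₂) := by rw [add_comm]


/-- Sets built from singletons by repeated admissible merges. -/
inductive Mergeable (G : SimpleGraph V) (r : V → ℝ≥0) (α : ℝ) : Set V → Prop
  | single (x : V) : Mergeable G r α {x}
  | merge {A B : Set V} (hA : Mergeable G r α A) (hB : Mergeable G r α B)
      (hd : Disjoint A B) (hdist : setDist G A B ≤ (min (wt r A) (wt r B)) ^ α) :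
      Mergeable G r α (A ∪ B)

lemma Mergeable.nonempty {S : Set V} (h : Mergeable G r α S) : S.Nonempty := by
  induction h with
  | single x => exact ⟨x, rfl⟩
  | merge hA hB hd hdist ihA ihB => exact ihA.mono Set.subset_union_left |>.mono fun z h => h
  
lemma Mergeable.finite {S : Set V} (h : Mergeable G r α S) : S.Finite := by
  induction h with
  | single x => exact Set.finite_singleton x
  | merge hA hB hd hdist ihA ihB => exact ihA.union ihB

lemma one_le_min_wt_of_merge (hconn : G.Connected) (hα : 1 ≤ α) {A B : Set V}
    (hd : Disjoint A B) (hdist : setDist G A B ≤ (min (wt r A) (wt r B)) ^ α) :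
    1 ≤ min (wt r A) (wt r B) := by
  by_contra hlt
  push_neg at hlt
  have h1 : (1:ℝ≥0∞) ≤ setDist G A B := one_le_setDist hconn hd
  have : (min (wt r A) (wt r B)) ^ α ≤ (min (wt r A) (wt r B)) ^ (1:ℝ) :=
    ENNReal.rpow_le_rpow_of_exponent_ge (le_of_lt hlt) hα
  rw [ENNReal.rpow_one] at this
  exact absurd (le_trans h1 (le_trans hdist this)) (not_le.2 hlt)

lemma dist_cast_triangle (hconn : G.Connected) (x a b y : V) :
    (G.dist x y : ℝ≥0∞) ≤ (G.dist x a : ℝ≥0∞) + (G.dist a b : ℝ≥0∞) + (G.dist b y : ℝ≥0∞) := by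
  have h1 : G.dist x y ≤ G.dist x a + G.dist a b + G.dist b y :=
    le_trans (hconn.dist_triangle (v := b)) (by
      have := hconn.dist_triangle (u := x) (v := a) (w := b)
      omega)
  exact_mod_cast h1

lemma Mergeable.diam (hconn : G.Connected) (hα : 1 ≤ α) {S : Set V}
    (hm : Mergeable G r α S) :
    ∀ x ∈ S, ∀ y ∈ S, (G.dist x y : ℝ≥0∞) ≤ diamBound α (wt r S) := by
  induction hm with
  | single z =>
    intro x hx y hy
    rw [Set.mem_singleton_iff] at hx hy
    subst hx; subst hy
    simp [SimpleGraph.dist_self]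
  | @merge A B hA hB hd hdist ihA ihB =>
    intro x hx y hy
    have hfa : wt r A ≠ ⊤ := (wt_lt_top_of_finite hA.finite).ne
    have hfb : wt r B ≠ ⊤ := (wt_lt_top_of_finite hB.finite).ne
    have hmin := one_le_min_wt_of_merge hconn hα hd hdist
    have h1a : 1 ≤ wt r A := le_trans hmin (min_le_left _ _)
    have h1b : 1 ≤ wt r B := le_trans hmin (min_le_right _ _)
    have hsuper := diamBound_superadd hα h1a h1b hfa hfb
    have hwU : wt r (A ∪ B) = wt r A + wt r B := wt_union_disjoint hd
    rw [hwU]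
    have hcross : ∀ x' ∈ A, ∀ y' ∈ B, (G.dist x' y' : ℝ≥0∞) ≤
        diamBound α (wt r A) + diamBound α (wt r B) + (min (wt r A) (wt r B)) ^ α := by
      intro x' hx' y' hy'
      obtain ⟨a, ha, b, hb, heq⟩ := exists_setDist_eq hA.nonempty hB.nonempty
      calc (G.dist x' y' : ℝ≥0∞)
          ≤ (G.dist x' a : ℝ≥0∞) + (G.dist a b : ℝ≥0∞) + (G.dist b y' : ℝ≥0∞) :=
            dist_cast_triangle hconn x' a b y'
        _ ≤ diamBound α (wt r A) + (min (wt r A) (wt r B)) ^ α + diamBound α (wt r B) := by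
            refine add_le_add (add_le_add (ihA x' hx' a ha) ?_) (ihB b hb y' hy')
            rw [← heq]; exact hdist
        _ = diamBound α (wt r A) + diamBound α (wt r B) + (min (wt r A) (wt r B)) ^ α := by ring
    rcases hx with hx | hx <;> rcases hy with hy | hy
    · exact le_trans (ihA x hx y hy) (le_trans (le_add_right (le_add_right le_rfl)) hsuper)
    · exact le_trans (hcross x hx y hy) hsuper
    · rw [SimpleGraph.dist_comm] at *
      exact le_trans (hcross y hy x hx) hsuper
    · exact le_trans (ihB x hx y hy)
        (le_trans (le_add_right (le_add_left le_rfl)) hsuper)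


lemma dist_end_le_of_mem_support {u v : V} {w : G.Walk u v} {p : V} (hp : p ∈ w.support) :
    G.dist p v ≤ w.length := by
  obtain ⟨q1, q2, rfl⟩ := SimpleGraph.Walk.mem_support_iff_exists_append.1 hp
  calc G.dist p v ≤ q2.length := SimpleGraph.dist_le q2
    _ ≤ q1.length + q2.length := Nat.le_add_left _ _
    _ = (q1.append q2).length := (SimpleGraph.Walk.length_append q1 q2).symm

lemma Mergeable.walk (hconn : G.Connected) (hα0 : 0 ≤ α) {S : Set V}
    (hm : Mergeable G r α S) :
    ∀ x ∈ S, ∀ y ∈ S, ∃ w : G.Walk x y,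
      ∀ p ∈ w.support, ∃ q ∈ S, (G.dist p q : ℝ≥0∞) ≤ (wt r S) ^ α := by
  induction hm with
  | single z =>
    intro x hx y hy
    rw [Set.mem_singleton_iff] at hx hy
    subst hx; subst hy
    refine ⟨SimpleGraph.Walk.nil, ?_⟩
    intro p hp
    rw [SimpleGraph.Walk.support_nil, List.mem_singleton] at hp
    subst hp
    exact ⟨p, rfl, by simp [SimpleGraph.dist_self]⟩
  | @merge A B hA hB hd hdist ihA ihB =>
    have hwA : (wt r A) ^ α ≤ (wt r (A ∪ B)) ^ α :=
      ENNReal.rpow_le_rpow (wt_mono Set.subset_union_left) hα0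
    have hwB : (wt r B) ^ α ≤ (wt r (A ∪ B)) ^ α :=
      ENNReal.rpow_le_rpow (wt_mono Set.subset_union_right) hα0
    have hminA : (min (wt r A) (wt r B)) ^ α ≤ (wt r (A ∪ B)) ^ α :=
      le_trans (ENNReal.rpow_le_rpow (min_le_left _ _) hα0) hwA
    -- cross walk
    have key : ∀ x ∈ A, ∀ y ∈ B, ∃ w : G.Walk x y,
        ∀ p ∈ w.support, ∃ q ∈ A ∪ B, (G.dist p q : ℝ≥0∞) ≤ (wt r (A ∪ B)) ^ α := by
      intro x hx y hy
      obtain ⟨a, ha, b, hb, heq⟩ := exists_setDist_eq hA.nonempty hB.nonempty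
      obtain ⟨w1, hw1⟩ := ihA x hx a ha
      obtain ⟨w2, hw2⟩ := ihB b hb y hy
      obtain ⟨g, hg⟩ := (hconn.preconnected a b).exists_walk_length_eq_dist
      refine ⟨(w1.append g).append w2, ?_⟩
      intro p hp
      rw [SimpleGraph.Walk.mem_support_append_iff, SimpleGraph.Walk.mem_support_append_iff] at hp
      rcases hp with (hp | hp) | hp
      · obtain ⟨q, hq, hle⟩ := hw1 p hp
        exact ⟨q, Or.inl hq, le_trans hle hwA⟩
      · refine ⟨b, Or.inr hb, ?_⟩
        have hdb : G.dist p b ≤ g.length := dist_end_le_of_mem_support hp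
        have : (G.dist p b : ℝ≥0∞) ≤ (G.dist a b : ℝ≥0∞) := by
          exact_mod_cast le_trans hdb (le_of_eq hg)
        refine le_trans this (le_trans ?_ hminA)
        rw [← heq]; exact hdist
      · obtain ⟨q, hq, hle⟩ := hw2 p hp
        exact ⟨q, Or.inr hq, le_trans hle hwB⟩
    intro x hx y hy
    rcases hx with hx | hx <;> rcases hy with hy | hy
    · obtain ⟨w, hw⟩ := ihA x hx y hy
      exact ⟨w, fun p hp => (hw p hp).imp fun q ⟨hq, hle⟩ => ⟨Or.inl hq, le_trans hle hwA⟩⟩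
    · exact key x hx y hy
    · obtain ⟨w, hw⟩ := key y hy x hx
      exact ⟨w.reverse, fun p hp => hw p (by rwa [SimpleGraph.Walk.support_reverse, List.mem_reverse] at hp)⟩
    · obtain ⟨w, hw⟩ := ihB x hx y hy
      exact ⟨w, fun p hp => (hw p hp).imp fun q ⟨hq, hle⟩ => ⟨Or.inr hq, le_trans hle hwB⟩⟩

lemma reachable_induce_of_walk {s : Set V} :
    ∀ {u v : V} (w : G.Walk u v) (hw : ∀ p ∈ w.support, p ∈ s),
      (G.induce s).Reachable ⟨u, hw u w.start_mem_support⟩ ⟨v, hw v w.end_mem_support⟩ := by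
  intro u v w
  induction w with
  | nil => intro hw; rfl
  | @cons u x v ha p ih =>
    intro hw
    have hsub : ∀ q ∈ p.support, q ∈ s := by
      intro q hq
      exact hw q (by rw [SimpleGraph.Walk.support_cons]; exact List.mem_cons_of_mem _ hq)
    refine SimpleGraph.Reachable.trans (SimpleGraph.Adj.reachable ?_) (ih hsub)
    exact ha


lemma merge_partition (hconn : G.Connected) (hα : 1 ≤ α) {C : Set V}
    (hC : C ∈ (CMP G r α).classes) :
    ∀ n (P : Finset (Set V)), P.card = n → P.Nonempty →
      (∀ A ∈ P, Mergeable G r α A) →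
      (∀ A ∈ P, ∀ B ∈ P, A ≠ B → Disjoint A B) →
      (⋃ A ∈ P, (A : Set V)) = C → Mergeable G r α C := by
  classical
  have hα0 : (0:ℝ) ≤ α := le_trans zero_le_one hα
  intro n
  induction n using Nat.strong_induction_on with
  | _ n ih =>
    intro P hcard hne hmerg hdisj hun
    rcases Nat.lt_or_ge n 2 with hn2 | hn2
    · -- n = 1
      have hn1 : P.card = 1 := by
        have h0 : P.card ≠ 0 := by
          rw [Finset.card_ne_zero]
          exact hne
        omega
      obtain ⟨A, hA⟩ := Finset.card_eq_one.1 hn1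
      subst hA
      have : (⋃ B ∈ ({A} : Finset (Set V)), (B : Set V)) = A := by simp
      rw [this] at hun
      exact hun ▸ hmerg A (Finset.mem_singleton_self A)
    · -- pick minimal-weight piece
      obtain ⟨A, hAP, hminA⟩ := Finset.exists_min_image P (wt r) hne
      have hAm : Mergeable G r α A := hmerg A hAP
      have hAne : A.Nonempty := hAm.nonempty
      have hAC : A ⊆ C := by
        rw [← hun]
        exact fun z hz => Set.mem_iUnion₂.2 ⟨A, hAP, hz⟩
      obtain ⟨B', hB'P, hB'ne'⟩ := Finset.exists_mem_ne (by omega : 1 < P.card) A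
      have hB'sub : B' ⊆ C \ A := by
        intro z hz
        have hB'C : B' ⊆ C := by
          rw [← hun]
          exact fun z hz => Set.mem_iUnion₂.2 ⟨B', hB'P, hz⟩
        refine ⟨hB'C hz, ?_⟩
        exact fun hzA => Set.disjoint_left.1 (hdisj B' hB'P A hAP hB'ne') hz hzA
      have hCAne : (C \ A).Nonempty := (hmerg B' hB'P).nonempty.mono hB'sub
      have hwtle : wt r A ≤ wt r (C \ A) :=
        le_trans (hminA B' hB'P) (wt_mono hB'sub)
      have hsplit := split_lemma hconn hα0 hC hAne hCAne Set.disjoint_sdiff_right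
        (Set.union_diff_cancel hAC)
      rw [min_eq_left hwtle] at hsplit
      obtain ⟨a, ha, q, hq, heq⟩ := exists_setDist_eq hAne hCAne
      -- find the piece containing q
      have hqC : q ∈ C := hq.1
      rw [← hun] at hqC
      obtain ⟨Q, hQP, hqQ⟩ := Set.mem_iUnion₂.1 hqC
      have hQA : Q ≠ A := fun h => hq.2 (h ▸ hqQ)
      have hQm : Mergeable G r α Q := hmerg Q hQP
      have hdistAQ : setDist G A Q ≤ (min (wt r A) (wt r Q)) ^ α := by
        rw [min_eq_left (hminA Q hQP)]
        calc setDist G A Q ≤ (G.dist a q : ℝ≥0∞) := setDist_le ha hqQ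
          _ = setDist G A (C \ A) := heq.symm
          _ ≤ (wt r A) ^ α := hsplit
      have hAQm : Mergeable G r α (A ∪ Q) :=
        Mergeable.merge hAm hQm (hdisj A hAP Q hQP (Ne.symm hQA)) hdistAQ
      -- new partition
      set P' : Finset (Set V) := insert (A ∪ Q) ((P.erase A).erase Q) with hP'
      have hmemP' : ∀ X, X ∈ P' ↔ X = A ∪ Q ∨ (X ∈ P ∧ X ≠ A ∧ X ≠ Q) := by
        intro X
        rw [hP', Finset.mem_insert, Finset.mem_erase, Finset.mem_erase]
        tauto
      have hcard' : P'.card < n := by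
        have h1 : ((P.erase A).erase Q).card ≤ P.card - 2 := by
          have hQe : Q ∈ P.erase A := Finset.mem_erase.2 ⟨hQA, hQP⟩
          rw [Finset.card_erase_of_mem hQe, Finset.card_erase_of_mem hAP]
          omega
        calc P'.card ≤ ((P.erase A).erase Q).card + 1 := Finset.card_insert_le _ _
          _ ≤ P.card - 2 + 1 := by omega
          _ < n := by omega
      refine ih P'.card hcard' P' rfl ⟨_, Finset.mem_insert_self _ _⟩ ?_ ?_ ?_
      · intro X hX
        rcases (hmemP' X).1 hX with h | ⟨hXP, -, -⟩
        · exact h ▸ hAQm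
        · exact hmerg X hXP
      · intro X hX Y hY hXY
        rcases (hmemP' X).1 hX with hX' | ⟨hXP, hXA, hXQ⟩ <;>
          rcases (hmemP' Y).1 hY with hY' | ⟨hYP, hYA, hYQ⟩
        · exact absurd (hX'.trans hY'.symm) hXY
        · subst hX'
          exact Set.disjoint_union_left.2
            ⟨hdisj A hAP Y hYP (Ne.symm hYA), hdisj Q hQP Y hYP (Ne.symm hYQ)⟩
        · subst hY'
          exact (Set.disjoint_union_left.2
            ⟨hdisj A hAP X hXP (Ne.symm hXA), hdisj Q hQP X hXP (Ne.symm hXQ)⟩).symm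
        · exact hdisj X hXP Y hYP hXY
      · -- union is C
        rw [← hun]
        apply Set.eq_of_subset_of_subset
        · intro z hz
          obtain ⟨X, hXP', hzX⟩ := Set.mem_iUnion₂.1 hz
          rcases (hmemP' X).1 hXP' with hX' | ⟨hXP, -, -⟩
          · subst hX'
            rcases hzX with hz' | hz'
            · exact Set.mem_iUnion₂.2 ⟨A, hAP, hz'⟩
            · exact Set.mem_iUnion₂.2 ⟨Q, hQP, hz'⟩
          · exact Set.mem_iUnion₂.2 ⟨X, hXP, hzX⟩
        · intro z hz
          obtain ⟨X, hXP, hzX⟩ := Set.mem_iUnion₂.1 hz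
          by_cases hXA : X = A
          · exact Set.mem_iUnion₂.2 ⟨A ∪ Q, (hmemP' _).2 (Or.inl rfl), Or.inl (hXA ▸ hzX)⟩
          · by_cases hXQ : X = Q
            · exact Set.mem_iUnion₂.2 ⟨A ∪ Q, (hmemP' _).2 (Or.inl rfl), Or.inr (hXQ ▸ hzX)⟩
            · exact Set.mem_iUnion₂.2 ⟨X, (hmemP' _).2 (Or.inr ⟨hXP, hXA, hXQ⟩), hzX⟩

lemma class_mergeable (hconn : G.Connected) (hα : 1 ≤ α) {C : Set V}
    (hC : C ∈ (CMP G r α).classes) (hfin : C.Finite) : Mergeable G r α C := by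
  classical
  have hCne : C.Nonempty := by
    obtain ⟨y, rfl⟩ := hC
    exact ⟨y, (CMP G r α).refl y⟩
  set P : Finset (Set V) := hfin.toFinset.image (fun x => ({x} : Set V)) with hP
  refine merge_partition hconn hα hC P.card P rfl ?_ ?_ ?_ ?_
  · obtain ⟨c, hc⟩ := hCne
    exact ⟨{c}, Finset.mem_image.2 ⟨c, hfin.mem_toFinset.2 hc, rfl⟩⟩
  · intro A hA
    obtain ⟨x, -, rfl⟩ := Finset.mem_image.1 hA
    exact Mergeable.single x
  · intro A hA B hB hAB
    obtain ⟨x, -, rfl⟩ := Finset.mem_image.1 hA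
    obtain ⟨y, -, rfl⟩ := Finset.mem_image.1 hB
    rw [Set.disjoint_singleton_left, Set.mem_singleton_iff]
    exact fun h => hAB (h ▸ rfl)
  · apply Set.eq_of_subset_of_subset
    · intro z hz
      obtain ⟨X, hXP, hzX⟩ := Set.mem_iUnion₂.1 hz
      obtain ⟨x, hx, rfl⟩ := Finset.mem_image.1 hXP
      rw [Set.mem_singleton_iff] at hzX
      exact hzX ▸ hfin.mem_toFinset.1 hx
    · intro z hz
      exact Set.mem_iUnion₂.2 ⟨{z}, Finset.mem_image.2 ⟨z, hfin.mem_toFinset.2 hz, rfl⟩, rfl⟩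


lemma class_nonempty' {C : Set V} (hC : C ∈ (CMP G r α).classes) : C.Nonempty := by
  obtain ⟨y, rfl⟩ := hC
  exact ⟨y, (CMP G r α).refl y⟩


end Aux

/-- For every cluster `C` of the CMP: (i) the ball `B(C, r(C)^α)` induces a connected
subgraph of `G`; (ii) `diam(C) ≤ max(r(C)·log₂ r(C)/2, 0)` if `α = 1`, and
`diam(C) ≤ r(C)^α/(2^α − 2)` if `α > 1`. -/
theorem CMP_cluster_ball_connected_and_diam_bound
    {V : Type*} (G : SimpleGraph V) (hconn : G.Connected)
    (hlf : ∀ v : V, (G.neighborSet v).Finite)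
    (r : V → ℝ≥0) (α : ℝ) (hα : 1 ≤ α) :
    ∀ C ∈ (CMP G r α).classes,
      (G.induce (ballSet G C ((wt r C) ^ α))).Connected ∧
      (∀ x ∈ C, ∀ y ∈ C, (G.dist x y : ℝ≥0∞) ≤ diamBound α (wt r C)) := by
  intro C hC
  have hα0 : (0:ℝ) ≤ α := le_trans zero_le_one hα
  have hαpos : (0:ℝ) < α := lt_of_lt_of_le zero_lt_one hα
  have hCne : C.Nonempty := class_nonempty' hC
  obtain ⟨c₀, hc₀⟩ := hCne
  rcases eq_or_ne (wt r C) ⊤ with hwt | hwt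
  · -- infinite weight: ball is everything
    have hball : ballSet G C ((wt r C) ^ α) = Set.univ := by
      rw [hwt, ENNReal.top_rpow_of_pos hαpos]
      apply Set.eq_univ_of_forall
      intro z
      exact ⟨c₀, hc₀, le_top⟩
    constructor
    · rw [hball]
      rw [SimpleGraph.connected_iff]
      refine ⟨?_, ⟨⟨c₀, Set.mem_univ c₀⟩⟩⟩
      rintro ⟨u, hu⟩ ⟨v, hv⟩
      obtain ⟨w⟩ := hconn.preconnected u v
      exact reachable_induce_of_walk w (fun p _ => Set.mem_univ p)
    · intro x hx y hy
      rw [hwt]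
      have : diamBound α ⊤ = ⊤ := by
        rcases eq_or_ne α 1 with h1 | h1
        · rw [diamBound, if_pos h1, if_pos rfl]
        · rw [diamBound, if_neg h1, ENNReal.top_rpow_of_pos hαpos]
          exact ENNReal.top_div_of_ne_top
            (ne_top_of_le_ne_top (ENNReal.rpow_ne_top_of_nonneg hα0 (by simp)) tsub_le_self)
      rw [this]
      exact le_top
  · -- finite weight
    have hfin : C.Finite := class_finite hconn hα hC hwt
    have hm : Mergeable G r α C := class_mergeable hconn hα hC hfin
    refine ⟨?_, fun x hx y hy => hm.diam hconn hα x hx y hy⟩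
    set R : ℝ≥0∞ := (wt r C) ^ α with hR
    set s : Set V := ballSet G C R with hs
    have hCs : C ⊆ s := by
      intro z hz
      exact ⟨z, hz, by simp [SimpleGraph.dist_self]⟩
    have hreach : ∀ z (hz : z ∈ s), (G.induce s).Reachable ⟨z, hz⟩ ⟨c₀, hCs hc₀⟩ := by
      intro z hz
      obtain ⟨a, haC, hda⟩ := id hz
      -- geodesic from z to a stays in the ball
      obtain ⟨g, hg⟩ := (hconn.preconnected z a).exists_walk_length_eq_dist
      have hgsub : ∀ p ∈ g.support, p ∈ s := by
        intro p hp
        refine ⟨a, haC, ?_⟩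
        have h1 : G.dist p a ≤ g.length := dist_end_le_of_mem_support hp
        have h2 : (G.dist p a : ℝ≥0∞) ≤ (G.dist z a : ℝ≥0∞) := by
          exact_mod_cast le_trans h1 (le_of_eq hg)
        exact le_trans h2 hda
      have hreach1 : (G.induce s).Reachable ⟨z, hgsub z g.start_mem_support⟩
          ⟨a, hgsub a g.end_mem_support⟩ := reachable_induce_of_walk g hgsub
      -- walk from a to c₀ within the ball
      obtain ⟨w, hw⟩ := hm.walk hconn hα0 a haC c₀ hc₀
      have hwsub : ∀ p ∈ w.support, p ∈ s := by
        intro p hp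
        obtain ⟨q, hqC, hle⟩ := hw p hp
        exact ⟨q, hqC, hle⟩
      have hreach2 : (G.induce s).Reachable ⟨a, hwsub a w.start_mem_support⟩
          ⟨c₀, hwsub c₀ w.end_mem_support⟩ := reachable_induce_of_walk w hwsub
      exact hreach1.trans hreach2
    rw [SimpleGraph.connected_iff]
    refine ⟨?_, ⟨⟨c₀, hCs hc₀⟩⟩⟩
    rintro ⟨u, hu⟩ ⟨v, hv⟩
    exact (hreach u hu).trans (hreach v hv).symm


end CMPPaper
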